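/- Suppose a unitary U can be written as U = e^{iφ} R((−1)^{b_m} P_m) ⋯ R((−1)^{b_1} P_1) C₀ with P_i nonidentity n-qubit Paulis, b_i ∈ {0,1}, C₀ in the n-qubit Clifford group, and R(±P) = e^{iπ(I∓P)/8}. Then U = e^{iφ'} R(P'_m) ⋯ R(P'_1) C₀' for some phase φ', nonidentity Paulis P'_i, and Clifford C₀' — i.e., all signs can be taken positive with the same number m of factors. -/

import Mathlib

open Matrix

/-- The single-qubit Pauli matrices `I, X, Y, Z`. -/
noncomputable def pauli1 : Fin 4 → Matrix (Fin 2) (Fin 2) ℂ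
  | 0 => 1
  | 1 => !![0, 1; 1, 0]
  | 2 => !![0, -Complex.I; Complex.I, 0]
  | 3 => !![1, 0; 0, -1]

/-- The `n`-qubit Pauli operator `P_f = ⊗ᵢ pauli1 (f i)`. -/
noncomputable def pauli (n : ℕ) (f : Fin n → Fin 4) :
    Matrix (Fin n → Fin 2) (Fin n → Fin 2) ℂ :=
  fun x y => ∏ i, pauli1 (f i) (x i) (y i)

/-- The channel representation `Û_{rs} = 2⁻ⁿ Tr(P_r U P_s U†)`. -/
noncomputable def chan (n : ℕ) (U : Matrix (Fin n → Fin 2) (Fin n → Fin 2) ℂ) :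
    Matrix (Fin n → Fin 4) (Fin n → Fin 4) ℂ :=
  fun r s => (2 ^ n : ℂ)⁻¹ * (pauli n r * U * pauli n s * Uᴴ).trace

/-- The `n`-qubit Clifford group: unitaries normalizing the Pauli group up to sign. -/
def IsClifford (n : ℕ) (C : Matrix (Fin n → Fin 2) (Fin n → Fin 2) ℂ) : Prop :=
  C ∈ Matrix.unitaryGroup (Fin n → Fin 2) ℂ ∧
  ∀ f : Fin n → Fin 4, ∃ g : Fin n → Fin 4, ∃ ε : ℂ, (ε = 1 ∨ ε = -1) ∧
    C * pauli n f * Cᴴ = ε • pauli n g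

/-- `R(A) = ½(1+e^{iπ/4})I + ½(1−e^{iπ/4})A`; for `A = ±P` a signed Pauli this is
`e^{iπ(I∓P)/8}`. -/
noncomputable def Rop (n : ℕ) (A : Matrix (Fin n → Fin 2) (Fin n → Fin 2) ℂ) :
    Matrix (Fin n → Fin 2) (Fin n → Fin 2) ℂ :=
  ((1 + Complex.exp (Complex.I * (Real.pi / 4))) / 2) • (1 : Matrix (Fin n → Fin 2) (Fin n → Fin 2) ℂ) +
    ((1 - Complex.exp (Complex.I * (Real.pi / 4))) / 2) • A

noncomputable def mu1 : Fin 4 → Fin 4 → ℂ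
  | 0, _ => 1
  | 1, 0 => 1 | 1, 1 => 1 | 1, 2 => Complex.I | 1, 3 => -Complex.I
  | 2, 0 => 1 | 2, 1 => -Complex.I | 2, 2 => 1 | 2, 3 => Complex.I
  | 3, 0 => 1 | 3, 1 => Complex.I | 3, 2 => -Complex.I | 3, 3 => 1

def sig1 : Fin 4 → Fin 4 → Fin 4
  | 0, b => b
  | 1, 0 => 1 | 1, 1 => 0 | 1, 2 => 3 | 1, 3 => 2
  | 2, 0 => 2 | 2, 1 => 3 | 2, 2 => 0 | 2, 3 => 1
  | 3, 0 => 3 | 3, 1 => 2 | 3, 2 => 1 | 3, 3 => 0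

lemma pauli1_mul (a b : Fin 4) : pauli1 a * pauli1 b = mu1 a b • pauli1 (sig1 a b) := by
  fin_cases a <;> fin_cases b <;>
    simp [pauli1, mu1, sig1, Matrix.one_fin_two, Matrix.mul_fin_two, Matrix.smul_of,
      Matrix.smul_cons, smul_eq_mul, Complex.ext_iff]

lemma pauli1_conjT (a : Fin 4) : (pauli1 a)ᴴ = pauli1 a := by
  fin_cases a <;> ext i j <;> fin_cases i <;> fin_cases j <;>
    simp [pauli1, Matrix.one_fin_two, Matrix.conjTranspose_apply]

lemma mu1_self (a : Fin 4) : mu1 a a = 1 := by fin_cases a <;> simp [mu1]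
lemma sig1_self (a : Fin 4) : sig1 a a = 0 := by fin_cases a <;> rfl
lemma mu1_ne_zero (a b : Fin 4) : mu1 a b ≠ 0 := by
  fin_cases a <;> fin_cases b <;> simp [mu1, Complex.I_ne_zero]
lemma mu1_swap (a b : Fin 4) : mu1 a b = mu1 b a ∨ mu1 a b = -mu1 b a := by
  fin_cases a <;> fin_cases b <;> simp [mu1]
lemma sig1_comm (a b : Fin 4) : sig1 a b = sig1 b a := by fin_cases a <;> fin_cases b <;> rfl
lemma pauli1_tr (a : Fin 4) : ∑ c : Fin 2, pauli1 a c c = if a = 0 then 2 else 0 := by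
  fin_cases a <;> simp [pauli1, Fin.sum_univ_two, Matrix.one_apply] <;> norm_num

lemma pauli_mul (n : ℕ) (f g : Fin n → Fin 4) :
    pauli n f * pauli n g
      = (∏ i, mu1 (f i) (g i)) • pauli n (fun i => sig1 (f i) (g i)) := by
  ext x y
  simp only [Matrix.mul_apply, pauli, Matrix.smul_apply, smul_eq_mul]
  calc ∑ z : Fin n → Fin 2, (∏ i, pauli1 (f i) (x i) (z i)) * ∏ i, pauli1 (g i) (z i) (y i)
      = ∑ z : Fin n → Fin 2, ∏ i, (pauli1 (f i) (x i) (z i) * pauli1 (g i) (z i) (y i)) := by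
        simp [Finset.prod_mul_distrib]
    _ = ∏ i, ∑ c : Fin 2, pauli1 (f i) (x i) c * pauli1 (g i) c (y i) := by
        rw [Finset.prod_univ_sum]
        simp [Fintype.piFinset_univ]
    _ = ∏ i, (mu1 (f i) (g i) • pauli1 (sig1 (f i) (g i))) (x i) (y i) := by
        refine Finset.prod_congr rfl fun i _ => ?_
        rw [← pauli1_mul, Matrix.mul_apply]
    _ = (∏ i, mu1 (f i) (g i)) * ∏ i, pauli1 (sig1 (f i) (g i)) (x i) (y i) := by
        simp [Matrix.smul_apply, smul_eq_mul, Finset.prod_mul_distrib]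

lemma pauli_zero (n : ℕ) : pauli n (fun _ => 0) = 1 := by
  ext x y
  simp only [pauli, pauli1, Matrix.one_apply]
  by_cases h : x = y
  · subst h; simp
  · rw [if_neg h]
    obtain ⟨i, hi⟩ := Function.ne_iff.mp h
    exact Finset.prod_eq_zero (Finset.mem_univ i) (if_neg hi)

lemma pauli_sq (n : ℕ) (f : Fin n → Fin 4) : pauli n f * pauli n f = 1 := by
  rw [pauli_mul]
  simp [mu1_self, sig1_self, pauli_zero]

lemma pauli_conjT (n : ℕ) (f : Fin n → Fin 4) : (pauli n f)ᴴ = pauli n f := by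
  ext x y
  have h : ∀ i, star (pauli1 (f i) (y i) (x i)) = pauli1 (f i) (x i) (y i) := fun i => by
    conv_rhs => rw [← pauli1_conjT (f i)]
    rw [Matrix.conjTranspose_apply]
  simp only [Matrix.conjTranspose_apply, pauli, star_prod, h]

lemma pauli_trace (n : ℕ) (f : Fin n → Fin 4) :
    (pauli n f).trace = ∏ i, (if f i = 0 then (2:ℂ) else 0) := by
  simp only [Matrix.trace, Matrix.diag, pauli]
  have key := Finset.prod_univ_sum (fun _ : Fin n => (Finset.univ : Finset (Fin 2)))
    (fun i c => pauli1 (f i) c c)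
  rw [Fintype.piFinset_univ] at key
  rw [← key]
  exact Finset.prod_congr rfl fun i _ => pauli1_tr (f i)

lemma prod_pm {ι : Type*} (s : Finset ι) (x : ι → ℂ) (h : ∀ i ∈ s, x i = 1 ∨ x i = -1) :
    (∏ i ∈ s, x i) = 1 ∨ (∏ i ∈ s, x i) = -1 := by
  have h2 : (∏ i ∈ s, x i) * (∏ i ∈ s, x i) = 1 := by
    rw [← Finset.prod_mul_distrib]
    exact Finset.prod_eq_one fun i hi => by rcases h i hi with h | h <;> rw [h] <;> ring
  exact mul_self_eq_one_iff.mp h2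

lemma pauli_comm_or (n : ℕ) (f g : Fin n → Fin 4) :
    ∃ s : ℂ, (s = 1 ∨ s = -1) ∧ pauli n f * pauli n g = s • (pauli n g * pauli n f) := by
  refine ⟨∏ i, mu1 (f i) (g i) * (mu1 (g i) (f i))⁻¹, ?_, ?_⟩
  · refine prod_pm _ _ fun i _ => ?_
    rcases mu1_swap (f i) (g i) with h | h <;> rw [h]
    · left; exact mul_inv_cancel₀ (mu1_ne_zero _ _)
    · right; rw [neg_mul, mul_inv_cancel₀ (mu1_ne_zero _ _)]
  · rw [pauli_mul, pauli_mul, smul_smul]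
    have : (fun i => sig1 (g i) (f i)) = fun i => sig1 (f i) (g i) := by
      funext i; exact sig1_comm _ _
    rw [this]
    congr 1
    rw [← Finset.prod_mul_distrib]
    exact Finset.prod_congr rfl fun i _ => by
      rw [mul_assoc, inv_mul_cancel₀ (mu1_ne_zero _ _), mul_one]

lemma IsClifford.mul_conjT {n : ℕ} {C : Matrix (Fin n → Fin 2) (Fin n → Fin 2) ℂ}
    (h : IsClifford n C) : C * Cᴴ = 1 := by
  have := (Matrix.mem_unitaryGroup_iff).mp h.1
  rwa [Matrix.star_eq_conjTranspose] at this

lemma IsClifford.conjT_mul {n : ℕ} {C : Matrix (Fin n → Fin 2) (Fin n → Fin 2) ℂ}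
    (h : IsClifford n C) : Cᴴ * C = 1 := by
  have := (Matrix.mem_unitaryGroup_iff').mp h.1
  rwa [Matrix.star_eq_conjTranspose] at this

lemma cliff_mul {n : ℕ} {C D : Matrix (Fin n → Fin 2) (Fin n → Fin 2) ℂ}
    (hC : IsClifford n C) (hD : IsClifford n D) : IsClifford n (C * D) := by
  refine ⟨mul_mem hC.1 hD.1, fun f => ?_⟩
  obtain ⟨g, ε, hε, hg⟩ := hD.2 f
  obtain ⟨h, ε', hε', hh⟩ := hC.2 g
  refine ⟨h, ε * ε', ?_, ?_⟩
  · rcases hε with h1 | h1 <;> rcases hε' with h2 | h2 <;> rw [h1, h2] <;> norm_num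
  · rw [Matrix.conjTranspose_mul]
    calc C * D * pauli n f * (Dᴴ * Cᴴ) = C * (D * pauli n f * Dᴴ) * Cᴴ := by
          simp only [Matrix.mul_assoc]
    _ = ε • (C * pauli n g * Cᴴ) := by rw [hg]; simp only [Matrix.mul_smul, Matrix.smul_mul]
    _ = ε • (ε' • pauli n h) := by rw [hh]
    _ = (ε * ε') • pauli n h := by rw [smul_smul]

lemma two_pow_ne (n : ℕ) : ((2:ℂ)^n) ≠ 0 := pow_ne_zero _ two_ne_zero

lemma cliff_nonid {n : ℕ} {C : Matrix (Fin n → Fin 2) (Fin n → Fin 2) ℂ}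
    (hC : IsClifford n C) {f g : Fin n → Fin 4} {ε : ℂ} (hε : ε = 1 ∨ ε = -1)
    (heq : C * pauli n f * Cᴴ = ε • pauli n g) (hf : f ≠ fun _ => 0) :
    g ≠ fun _ => 0 := by
  intro hg
  subst hg
  have htr : (C * pauli n f * Cᴴ).trace = (pauli n f).trace := by
    rw [Matrix.trace_mul_cycle, hC.conjT_mul, Matrix.one_mul]
  have h0 : (pauli n f).trace = 0 := by
    rw [pauli_trace]
    obtain ⟨i, hi⟩ := Function.ne_iff.mp hf
    exact Finset.prod_eq_zero (Finset.mem_univ i) (if_neg hi)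
  have h2 : (pauli n (fun _ => 0) : Matrix _ _ ℂ).trace = (2:ℂ)^n := by
    rw [pauli_trace]; simp
  rw [heq, Matrix.trace_smul, h2, h0] at htr
  have : ε ≠ 0 := by rcases hε with h | h <;> rw [h] <;> norm_num
  rcases mul_eq_zero.mp htr with h | h
  · exact this h
  · exact two_pow_ne n h

lemma comb_mul {n : ℕ} (a b c d : ℂ) (P : Matrix (Fin n → Fin 2) (Fin n → Fin 2) ℂ)
    (hP : P * P = 1) :
    (a • (1 : Matrix (Fin n → Fin 2) (Fin n → Fin 2) ℂ) + b • P) * (c • 1 + d • P)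
      = (a*c + b*d) • 1 + (a*d + b*c) • P := by
  simp only [add_mul, mul_add, Matrix.smul_mul, Matrix.mul_smul, one_mul, mul_one, hP, smul_smul]
  module

noncomputable def Dmat (n : ℕ) (f : Fin n → Fin 4) :
    Matrix (Fin n → Fin 2) (Fin n → Fin 2) ℂ :=
  ((1 - Complex.I)/2) • 1 + ((1 + Complex.I)/2) • pauli n f

lemma Dmat_conjT (n : ℕ) (f : Fin n → Fin 4) :
    (Dmat n f)ᴴ = ((1 + Complex.I)/2) • 1 + ((1 - Complex.I)/2) • pauli n f := by
  unfold Dmat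
  rw [Matrix.conjTranspose_add, Matrix.conjTranspose_smul, Matrix.conjTranspose_smul,
    Matrix.conjTranspose_one, pauli_conjT]
  congr 1 <;> congr 1 <;> simp [Complex.ext_iff]

lemma Dmat_cliff (n : ℕ) (f : Fin n → Fin 4) : IsClifford n (Dmat n f) := by
  have hsq := pauli_sq n f
  constructor
  · rw [Matrix.mem_unitaryGroup_iff, Matrix.star_eq_conjTranspose, Dmat_conjT]
    unfold Dmat
    rw [comb_mul _ _ _ _ _ hsq]
    have e1 : (1 - Complex.I)/2 * ((1 + Complex.I)/2) + (1 + Complex.I)/2 * ((1 - Complex.I)/2)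
        = 1 := by linear_combination (-1/2 : ℂ) * Complex.I_mul_I
    have e2 : (1 - Complex.I)/2 * ((1 - Complex.I)/2) + (1 + Complex.I)/2 * ((1 + Complex.I)/2)
        = 0 := by linear_combination (1/2 : ℂ) * Complex.I_mul_I
    rw [e1, e2]; simp
  · intro g
    obtain ⟨s, hs, hcomm⟩ := pauli_comm_or n f g
    set Q := pauli n g with hQ
    have expand : Dmat n f * Q * (Dmat n f)ᴴ
        = ((1 - Complex.I)/2 * ((1 + Complex.I)/2) + (1 + Complex.I)/2 * ((1 - Complex.I)/2) * s) • Q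
          + ((1 - Complex.I)/2 * ((1 - Complex.I)/2)
              + (1 + Complex.I)/2 * ((1 + Complex.I)/2) * s) • (Q * pauli n f) := by
      have hPQP : pauli n f * Q * pauli n f = s • Q := by
        rw [hcomm, Matrix.smul_mul, Matrix.mul_assoc, hsq, Matrix.mul_one]
      rw [Dmat_conjT]
      unfold Dmat
      simp only [add_mul, mul_add, Matrix.smul_mul, Matrix.mul_smul, one_mul, mul_one]
      rw [hPQP, hcomm]
      module
    rcases hs with hs1 | hs1
    · refine ⟨g, 1, Or.inl rfl, ?_⟩
      rw [expand, hs1]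
      have e1 : (1 - Complex.I)/2 * ((1 + Complex.I)/2)
          + (1 + Complex.I)/2 * ((1 - Complex.I)/2) * 1 = 1 := by
        linear_combination (-1/2 : ℂ) * Complex.I_mul_I
      have e2 : (1 - Complex.I)/2 * ((1 - Complex.I)/2)
          + (1 + Complex.I)/2 * ((1 + Complex.I)/2) * 1 = 0 := by
        linear_combination (1/2 : ℂ) * Complex.I_mul_I
      rw [e1, e2, one_smul, zero_smul, add_zero]
    · -- anticommuting case
      set μ : ℂ := ∏ i, mu1 (g i) (f i) with hμ
      have hQP : Q * pauli n f = μ • pauli n (fun i => sig1 (g i) (f i)) := pauli_mul n g f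
      have hanti : pauli n f * Q = -(Q * pauli n f) := by rw [hcomm, hs1, neg_smul, one_smul]
      have hQPsq : (Q * pauli n f) * (Q * pauli n f) = -1 := by
        calc (Q * pauli n f) * (Q * pauli n f) = Q * (pauli n f * Q) * pauli n f := by
              simp only [Matrix.mul_assoc]
        _ = -(Q * (Q * pauli n f) * pauli n f) := by
              rw [hanti]; simp only [Matrix.mul_neg, Matrix.neg_mul]
        _ = -((Q * Q) * (pauli n f * pauli n f)) := by simp only [Matrix.mul_assoc]
        _ = -1 := by rw [hQ, pauli_sq, hsq, Matrix.mul_one]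
      have hμμ : μ * μ = -1 := by
        have h1 : (μ * μ) • (1 : Matrix (Fin n → Fin 2) (Fin n → Fin 2) ℂ) =
            (-1 : ℂ) • 1 := by
          calc (μ * μ) • (1 : Matrix (Fin n → Fin 2) (Fin n → Fin 2) ℂ)
              = (μ • pauli n (fun i => sig1 (g i) (f i))) *
                (μ • pauli n (fun i => sig1 (g i) (f i))) := by
                rw [Matrix.smul_mul, Matrix.mul_smul, pauli_sq, smul_smul]
          _ = (-1 : ℂ) • 1 := by rw [← hQP, hQPsq, neg_smul, one_smul]
        have := congrFun (congrFun h1 (fun _ => 0)) (fun _ => 0)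
        simpa [Matrix.smul_apply, Matrix.one_apply] using this
      refine ⟨fun i => sig1 (g i) (f i), -Complex.I * μ, ?_, ?_⟩
      · apply mul_self_eq_one_iff.mp
        calc (-Complex.I * μ) * (-Complex.I * μ) = (Complex.I * Complex.I) * (μ * μ) := by ring
        _ = 1 := by rw [Complex.I_mul_I, hμμ]; ring
      · rw [expand, hs1]
        have e1 : (1 - Complex.I)/2 * ((1 + Complex.I)/2)
            + (1 + Complex.I)/2 * ((1 - Complex.I)/2) * (-1) = 0 := by ring
        have e2 : (1 - Complex.I)/2 * ((1 - Complex.I)/2)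
            + (1 + Complex.I)/2 * ((1 + Complex.I)/2) * (-1) = -Complex.I := by
          ring
        rw [e1, e2, zero_smul, zero_add, hQP, smul_smul, mul_comm (-Complex.I) μ]

lemma omega_sq : Complex.exp (Complex.I * (Real.pi / 4)) * Complex.exp (Complex.I * (Real.pi / 4))
    = Complex.I := by
  rw [← Complex.exp_add]
  have h : Complex.I * (Real.pi / 4) + Complex.I * (Real.pi / 4)
      = (Real.pi / 2 : ℝ) * Complex.I := by push_cast; ring
  rw [h, Complex.exp_mul_I, ← Complex.ofReal_cos, ← Complex.ofReal_sin,
    Real.cos_pi_div_two, Real.sin_pi_div_two]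
  simp

/-- Claim A: `R(-P) = ω • (R(P) * D)`. -/
lemma claimA (n : ℕ) (f : Fin n → Fin 4) :
    Rop n ((-1 : ℂ) • pauli n f)
      = Complex.exp (Complex.I * (Real.pi / 4)) • (Rop n (pauli n f) * Dmat n f) := by
  unfold Rop Dmat
  rw [comb_mul _ _ _ _ _ (pauli_sq n f)]
  set ω := Complex.exp (Complex.I * (Real.pi / 4)) with hω
  have h2 : ω * ω = Complex.I := omega_sq
  rw [smul_add, smul_smul, smul_smul, smul_smul]
  match_scalars
  · linear_combination (Complex.I/2) * h2 + (1/2 : ℂ) * Complex.I_mul_I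
  · linear_combination (-Complex.I/2) * h2 + (-1/2 : ℂ) * Complex.I_mul_I

/-- conjugation of `Rop` by a unitary. -/
lemma Rop_conj {n : ℕ} {C : Matrix (Fin n → Fin 2) (Fin n → Fin 2) ℂ}
    (hC : Cᴴ * C = 1) (A : Matrix (Fin n → Fin 2) (Fin n → Fin 2) ℂ) :
    C * Rop n A = Rop n (C * A * Cᴴ) * C := by
  unfold Rop
  rw [mul_add, add_mul, Matrix.mul_smul, Matrix.mul_one, Matrix.smul_mul, Matrix.one_mul,
    Matrix.mul_smul, Matrix.smul_mul]
  congr 1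
  rw [Matrix.mul_assoc, hC, Matrix.mul_one]

/-- Push a Clifford through a product of signed rotations. -/
lemma push {n : ℕ} {D : Matrix (Fin n → Fin 2) (Fin n → Fin 2) ℂ} (hD : IsClifford n D) :
    ∀ l : List (ℂ × (Fin n → Fin 4)),
      (∀ p ∈ l, (p.1 = 1 ∨ p.1 = -1) ∧ p.2 ≠ fun _ => 0) →
      ∃ l' : List (ℂ × (Fin n → Fin 4)), l'.length = l.length ∧
        (∀ p ∈ l', (p.1 = 1 ∨ p.1 = -1) ∧ p.2 ≠ fun _ => 0) ∧
        D * (l.map fun p => Rop n (p.1 • pauli n p.2)).prod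
          = (l'.map fun p => Rop n (p.1 • pauli n p.2)).prod * D := by
  intro l
  induction l with
  | nil => intro _; exact ⟨[], rfl, by simp, by simp⟩
  | cons p t ih =>
    intro hcond
    obtain ⟨l', hlen, hcond', heq⟩ := ih fun q hq => hcond q (List.mem_cons_of_mem p hq)
    obtain ⟨g, ε, hε, hg⟩ := hD.2 p.2
    have hp := hcond p List.mem_cons_self
    refine ⟨(p.1 * ε, g) :: l', by simp [hlen], ?_, ?_⟩
    · intro q hq
      rcases List.mem_cons.mp hq with h | h
      · subst h
        constructor
        · rcases hp.1 with h1 | h1 <;> rcases hε with h2 | h2 <;> rw [h1, h2] <;> norm_num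
        · exact cliff_nonid hD hε hg hp.2
      · exact hcond' q h
    · simp only [List.map_cons, List.prod_cons]
      have step : D * Rop n (p.1 • pauli n p.2) = Rop n ((p.1 * ε) • pauli n g) * D := by
        rw [Rop_conj hD.conjT_mul]
        congr 2
        rw [Matrix.mul_smul, Matrix.smul_mul, hg, smul_smul]
      rw [← Matrix.mul_assoc, step, Matrix.mul_assoc, heq, ← Matrix.mul_assoc]

lemma main_lemma (n : ℕ) : ∀ (k : ℕ) (l : List (ℂ × (Fin n → Fin 4))), l.length = k →
    (∀ p ∈ l, (p.1 = 1 ∨ p.1 = -1) ∧ p.2 ≠ fun _ => 0) →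
    ∀ C₀ : Matrix (Fin n → Fin 2) (Fin n → Fin 2) ℂ, IsClifford n C₀ →
    ∃ (φ' : ℝ) (l' : List (Fin n → Fin 4))
      (C₀' : Matrix (Fin n → Fin 2) (Fin n → Fin 2) ℂ),
      l'.length = k ∧ (∀ q ∈ l', q ≠ fun _ => 0) ∧ IsClifford n C₀' ∧
      (l.map fun p => Rop n (p.1 • pauli n p.2)).prod * C₀
        = Complex.exp (Complex.I * φ') • ((l'.map fun q => Rop n (pauli n q)).prod * C₀') := by
  intro k
  induction k with
  | zero =>
    intro l hl _ C₀ hC₀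
    rw [List.length_eq_zero_iff] at hl
    subst hl
    exact ⟨0, [], C₀, rfl, by simp, hC₀, by simp⟩
  | succ k ih =>
    intro l hl hcond C₀ hC₀
    match l, hl with
    | p :: t, hl =>
      have hlt : t.length = k := by simpa using hl
      have hp := hcond p List.mem_cons_self
      have ht : ∀ q ∈ t, (q.1 = 1 ∨ q.1 = -1) ∧ q.2 ≠ fun _ => 0 :=
        fun q hq => hcond q (List.mem_cons_of_mem p hq)
      rcases hp.1 with h1 | h1
      · -- positive sign
        obtain ⟨φ', t', C₀', hlen, hnon, hcliff, heq⟩ := ih t hlt ht C₀ hC₀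
        refine ⟨φ', p.2 :: t', C₀', by simp [hlen], ?_, hcliff, ?_⟩
        · intro q hq
          rcases List.mem_cons.mp hq with h | h
          · subst h; exact hp.2
          · exact hnon q h
        · simp only [List.map_cons, List.prod_cons, Matrix.mul_assoc, heq, h1, one_smul,
            Matrix.mul_smul]
      · -- negative sign
        obtain ⟨t'', hlen'', hcond'', hpush⟩ := push (Dmat_cliff n p.2) t ht
        obtain ⟨φ', t', C₀', hlen, hnon, hcliff, heq⟩ :=
          ih t'' (hlen''.trans hlt) hcond'' (Dmat n p.2 * C₀) (cliff_mul (Dmat_cliff n p.2) hC₀)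
        refine ⟨Real.pi / 4 + φ', p.2 :: t', C₀', by simp [hlen], ?_, hcliff, ?_⟩
        · intro q hq
          rcases List.mem_cons.mp hq with h | h
          · subst h; exact hp.2
          · exact hnon q h
        · have hphase : Complex.exp (Complex.I * ((Real.pi / 4 + φ' : ℝ) : ℂ))
              = Complex.exp (Complex.I * (Real.pi / 4)) * Complex.exp (Complex.I * φ') := by
            rw [← Complex.exp_add]; congr 1; push_cast; ring
          simp only [List.map_cons, List.prod_cons]
          rw [h1, claimA n p.2, hphase]
          have chain : Rop n (pauli n p.2) * Dmat n p.2
                * (t.map fun q => Rop n (q.1 • pauli n q.2)).prod * C₀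
              = Complex.exp (Complex.I * φ') •
                (Rop n (pauli n p.2) * (t'.map fun q => Rop n (pauli n q)).prod * C₀') := by
            calc Rop n (pauli n p.2) * Dmat n p.2
                  * (t.map fun q => Rop n (q.1 • pauli n q.2)).prod * C₀
                = Rop n (pauli n p.2)
                    * (Dmat n p.2 * (t.map fun q => Rop n (q.1 • pauli n q.2)).prod) * C₀ := by
                  simp only [Matrix.mul_assoc]
              _ = Rop n (pauli n p.2)
                    * ((t''.map fun q => Rop n (q.1 • pauli n q.2)).prod * Dmat n p.2) * C₀ := by
                  rw [hpush]
              _ = Rop n (pauli n p.2)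
                    * ((t''.map fun q => Rop n (q.1 • pauli n q.2)).prod * (Dmat n p.2 * C₀)) := by
                  simp only [Matrix.mul_assoc]
              _ = Rop n (pauli n p.2) * (Complex.exp (Complex.I * φ') •
                    ((t'.map fun q => Rop n (pauli n q)).prod * C₀')) := by
                  rw [heq]
              _ = Complex.exp (Complex.I * φ') •
                    (Rop n (pauli n p.2) * (t'.map fun q => Rop n (pauli n q)).prod * C₀') := by
                  rw [Matrix.mul_smul]; simp only [Matrix.mul_assoc]
          rw [Matrix.smul_mul, Matrix.smul_mul, chain, smul_smul]

theorem signs_can_be_taken_positive (n m : ℕ)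
    (U : Matrix (Fin n → Fin 2) (Fin n → Fin 2) ℂ)
    (φ : ℝ) (P : Fin m → (Fin n → Fin 4)) (b : Fin m → Fin 2)
    (C₀ : Matrix (Fin n → Fin 2) (Fin n → Fin 2) ℂ)
    (hP : ∀ i, P i ≠ fun _ => 0) (hC₀ : IsClifford n C₀)
    (hU : U = Complex.exp (Complex.I * φ) •
      ((List.ofFn fun i : Fin m => Rop n (((-1 : ℂ) ^ (b i : ℕ)) • pauli n (P i))).prod * C₀)) :
    ∃ (φ' : ℝ) (P' : Fin m → (Fin n → Fin 4))
      (C₀' : Matrix (Fin n → Fin 2) (Fin n → Fin 2) ℂ),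
      (∀ i, P' i ≠ fun _ => 0) ∧ IsClifford n C₀' ∧
      U = Complex.exp (Complex.I * φ') •
        ((List.ofFn fun i : Fin m => Rop n (pauli n (P' i))).prod * C₀') := by
  set l : List (ℂ × (Fin n → Fin 4)) := List.ofFn fun i => (((-1 : ℂ) ^ (b i : ℕ)), P i) with hldef
  have hmap : (l.map fun p => Rop n (p.1 • pauli n p.2))
      = List.ofFn fun i : Fin m => Rop n (((-1 : ℂ) ^ (b i : ℕ)) • pauli n (P i)) := by
    rw [hldef, List.map_ofFn]; rfl
  have hcond : ∀ p ∈ l, (p.1 = 1 ∨ p.1 = -1) ∧ p.2 ≠ fun _ => 0 := by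
    intro p hp
    rw [hldef, List.mem_ofFn] at hp
    obtain ⟨i, hi⟩ := hp
    subst hi
    refine ⟨?_, hP i⟩
    have : (b i : ℕ) = 0 ∨ (b i : ℕ) = 1 := by omega
    rcases this with h | h <;> simp [h]
  obtain ⟨φ', l', C₀', hlen, hnon, hcliff, heq⟩ :=
    main_lemma n m l (by simp [hldef]) hcond C₀ hC₀
  refine ⟨φ + φ', fun i => l'.get (Fin.cast hlen.symm i), C₀', ?_, hcliff, ?_⟩
  · intro i
    exact hnon _ (List.get_mem _ _)
  · have hofn : (List.ofFn fun i : Fin m => Rop n (pauli n (l'.get (Fin.cast hlen.symm i))))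
        = l'.map fun q => Rop n (pauli n q) := by
      subst hlen
      simp only [Fin.cast_refl, Function.id_def, id_eq]
      conv_rhs => rw [← List.ofFn_get l']
      rw [List.map_ofFn]
      rfl
    rw [hU, ← hmap, heq, hofn, smul_smul, ← Complex.exp_add]
    congr 2
    push_cast
    ring
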